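/- Over an infinite field K, any pseudo-band module Bd(vʳ, φ) is a direct summand of a pseudo-band module Bd(vˢ, ψ) for every integer s ≥ r. -/

import Mathlib

/-! # Framework for string algebras

Definitions supporting the formalization of results from
Huisgen-Zimmermann and Smalø, "The homology of string algebras I".

`Λ = KΓ/I` is presented intrinsically: a `StringPres K Λ` consists of a finite quiver,
a complete set of orthogonal primitive idempotents and arrow elements of `Λ`, such that
the nonzero path monomials form a `K`-basis of `Λ` (this encodes that the relation ideal
is generated by paths, i.e. monomial), together with the special biserial conditions.

Paths are encoded by lists of arrows, the *head* of the list being the *last* arrow of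
the path (so that `List.prod` of the arrow images is the corresponding composite in `Λ`,
with the convention `pq` = "`p` after `q`", and right subpaths are list suffixes). -/

namespace StringAlg

open Function

section Defs

variable {K Λ : Type} [Field K] [Ring Λ] [Algebra K Λ]

/-- Composability of a list of arrows (head of list = last arrow of the path). -/
def pathChain {V A : Type} (s t : A → V) (l : List A) : Prop :=
  l.Chain' (fun x y => s x = t y)

/-- The path encoded by `l` starts (i.e. has its source) at the vertex `v`. -/
def startsAt {V A : Type} (s : A → V) (v : V) (l : List A) : Prop :=
  ∀ h : l ≠ [], s (l.getLast h) = v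

/-- The monomial: product of the arrows along the path, times the source idempotent. -/
def monOf {Λ V A : Type} [Ring Λ] (arr : A → Λ) (e : V → Λ) (v : V) (l : List A) : Λ :=
  (l.map arr).prod * e v

end Defs

/-- A presentation of `Λ` as a string algebra `KΓ/I`. -/
structure StringPres (K Λ : Type) [Field K] [Ring Λ] [Algebra K Λ] : Type 1 where
  V : Type
  A : Type
  [fV : Fintype V]
  src : A → V
  tgt : A → V
  e : V → Λ
  arr : A → Λ
  idem : ∀ v, e v * e v = e v
  orth : ∀ v w, v ≠ w → e v * e w = 0
  sum_one : ∑ v, e v = 1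
  arr_eq : ∀ a, e (tgt a) * arr a * e (src a) = arr a
  arr_ne : ∀ a, arr a ≠ 0
  basis_indep : LinearIndependent K
    (fun p : {p : V × List A // pathChain src tgt p.2 ∧ startsAt src p.1 p.2 ∧
        monOf arr e p.1 p.2 ≠ 0} => monOf arr e p.1.1 p.1.2)
  basis_span : Submodule.span K
    (Set.range (fun p : {p : V × List A // pathChain src tgt p.2 ∧ startsAt src p.1 p.2 ∧
        monOf arr e p.1 p.2 ≠ 0} => monOf arr e p.1.1 p.1.2)) = ⊤
  two_out : ∀ (v : V) (a b c : A), src a = v → src b = v → src c = v → a = b ∨ a = c ∨ b = c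
  two_in : ∀ (v : V) (a b c : A), tgt a = v → tgt b = v → tgt c = v → a = b ∨ a = c ∨ b = c
  uniq_post : ∀ (a b c : A), arr b * arr a ≠ 0 → arr c * arr a ≠ 0 → b = c
  uniq_pre : ∀ (a b c : A), arr a * arr b ≠ 0 → arr a * arr c ≠ 0 → b = c

variable {K Λ : Type} [Field K] [Ring Λ] [Algebra K Λ]

/-- `Λ` is a string algebra (for the fixed `K`-algebra structure). -/
def IsStringAlgebra (K Λ : Type) [Field K] [Ring Λ] [Algebra K Λ] : Prop :=
  Nonempty (StringPres K Λ)

namespace StringPres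

variable (P : StringPres K Λ)

/-- The path monomial of `P` at vertex `v` along the list of arrows `l`. -/
def mon (v : P.V) (l : List P.A) : Λ := monOf P.arr P.e v l

/-- `l` is a legal path (not in the relation ideal) starting at `v`. -/
def legal (v : P.V) (l : List P.A) : Prop :=
  pathChain P.src P.tgt l ∧ startsAt P.src v l ∧ P.mon v l ≠ 0

/-- End vertex (target) of the path `l` starting at `v`. -/
def endV (v : P.V) : List P.A → P.V
  | [] => v
  | a :: _ => P.tgt a

end StringPres

/-- `p⁻¹q` is a word: both paths are legal, start at the common vertex `v`, and have
distinct first arrows when both are nontrivial.  (The first arrow of a path is the last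
entry of the encoding list.) -/
def IsWordPair (P : StringPres K Λ) (v : P.V) (p q : List P.A) : Prop :=
  P.legal v p ∧ P.legal v q ∧ (p ≠ [] → q ≠ [] → p.getLast? ≠ q.getLast?)

/-- `u` is the longest path with `u ++ l` a legal path (the path `𝔲` of the paper). -/
def IsLongestExt (P : StringPres K Λ) (v : P.V) (l u : List P.A) : Prop :=
  P.legal v (u ++ l) ∧ ∀ u' : List P.A, P.legal v (u' ++ l) → u'.length ≤ u.length

/-- The relations defining the cyclic string module `St(p⁻¹q)` as a quotient of `Λ`:
kill `1 - e v` and all path monomials at `v` which are not right subpaths of `p` or `q`. -/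
def veeRels (P : StringPres K Λ) (v : P.V) (p q : List P.A) : Set Λ :=
  {1 - P.e v} ∪ {x | ∃ l : List P.A, ¬ l <:+ p ∧ ¬ l <:+ q ∧ x = P.mon v l}

/-- The cyclic string module `St(p⁻¹q)`, with top element the class of `1`. -/
abbrev StVee (P : StringPres K Λ) (v : P.V) (p q : List P.A) : Type :=
  Λ ⧸ Submodule.span Λ (veeRels P v p q)

/-- The simple module `Λe/Je` attached to a vertex. -/
abbrev SimpleAt (P : StringPres K Λ) (v : P.V) : Type :=
  Λ ⧸ Submodule.span Λ ({1 - P.e v} ∪ Set.range fun a => P.arr a * P.e v)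

/-- The syllable at (doubled) position `k`: even positions carry the `p`-syllables,
odd positions the `q`-syllables, in the order `… pᵢ⁻¹ qᵢ p_{i+1}⁻¹ q_{i+1} …`. -/
def sylOf {A : Type} (p q : ℤ → List A) (k : ℤ) : List A :=
  if Even k then p (k / 2) else q ((k - 1) / 2)

/-- A generalized word `w = (pᵢ⁻¹qᵢ)_{i∈ℤ}`, centered (trivial syllables occur only at the
two tail ends, and position `0` lies in the support unless `w` is trivial). -/
structure GenWord (P : StringPres K Λ) : Type where
  E : ℤ → P.V
  p : ℤ → List P.A
  q : ℤ → List P.A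
  pair : ∀ i, IsWordPair P (E i) (p i) (q i)
  link_v : ∀ i, q i ≠ [] → p (i + 1) ≠ [] →
    P.endV (E i) (q i) = P.endV (E (i + 1)) (p (i + 1))
  link_a : ∀ i, q i ≠ [] → p (i + 1) ≠ [] → (q i).head? ≠ (p (i + 1)).head?
  conn : ∀ i j k : ℤ, i ≤ j → j ≤ k → sylOf p q i ≠ [] → sylOf p q k ≠ [] → sylOf p q j ≠ []
  centered : (∀ i, p i = [] ∧ q i = []) ∨ (p 0 ≠ [] ∨ q 0 ≠ [])

namespace GenWord

variable {P : StringPres K Λ}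

/-- The support of a generalized word. -/
def supp (w : GenWord P) : Set ℤ := {i | w.p i ≠ [] ∨ w.q i ≠ []}

/-- The support, with the center adjoined. -/
def supp' (w : GenWord P) : Set ℤ := w.supp ∪ {0}

/-- A word is finite if its support is. -/
def IsFiniteWord (w : GenWord P) : Prop := w.supp.Finite

end GenWord

/-- The relations presenting the generalized string module `St(w)` as a quotient of the
free module `⊕_{i∈ℤ} Λ`: coordinates off the support are killed, each kept coordinate is a
copy of `Λe(i)`, consecutive coordinates are glued by `qᵢ xᵢ = p_{i+1} x_{i+1}`, and the
boundary correction terms `Λ·(α pₗ)` resp. `Λ·(β q_r)` are imposed at a least/greatest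
support element when the word admits a one-arrow extension there. -/
def genRels (P : StringPres K Λ) (w : GenWord P) : Set (ℤ →₀ Λ) :=
  {x | ∃ i : ℤ, x = Finsupp.single i (1 - P.e (w.E i))} ∪
  {x | ∃ i : ℤ, i ∉ w.supp' ∧ x = Finsupp.single i (1 : Λ)} ∪
  {x | ∃ i : ℤ, i ∈ w.supp' ∧ (i + 1) ∈ w.supp' ∧
      x = Finsupp.single i (P.mon (w.E i) (w.q i)) -
          Finsupp.single (i + 1) (P.mon (w.E (i + 1)) (w.p (i + 1)))} ∪
  {x | ∃ l : ℤ, IsLeast w.supp' l ∧ ∃ α : P.A, IsWordPair P (w.E l) (α :: w.p l) (w.q l) ∧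
      x = Finsupp.single l (P.mon (w.E l) (α :: w.p l))} ∪
  {x | ∃ r : ℤ, IsGreatest w.supp' r ∧ ∃ β : P.A, IsWordPair P (w.E r) (w.p r) (β :: w.q r) ∧
      x = Finsupp.single r (P.mon (w.E r) (β :: w.q r))}

/-- The (generalized) string module `St(w)`. -/
abbrev StGen (P : StringPres K Λ) (w : GenWord P) : Type :=
  (ℤ →₀ Λ) ⧸ Submodule.span Λ (genRels P w)

/-- Projective dimension at most `n`, defined via syzygies. -/
def projDimLE (Λ : Type) [Ring Λ] : ℕ → ModuleCat.{0} Λ → Prop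
  | 0, M => Module.Projective Λ M
  | n + 1, M => ∃ (P : ModuleCat.{0} Λ) (f : ↑P →ₗ[Λ] ↑M), Module.Projective Λ P ∧
      Function.Surjective f ∧ projDimLE Λ n (ModuleCat.of Λ (LinearMap.ker f))

/-- Finite projective dimension. -/
def HasFinPD (Λ : Type) [Ring Λ] (M : Type) [AddCommGroup M] [Module Λ M] : Prop :=
  ∃ n, projDimLE Λ n (ModuleCat.of Λ M)

/-- The Jacobson radical of `Λ`, as a left ideal. -/
def jrad (Λ : Type) [Ring Λ] : Ideal Λ := Ideal.jacobson ⊥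

/-- Global dimension at most `n`. -/
def glDimLE (Λ : Type) [Ring Λ] (n : ℕ) : Prop := ∀ M : ModuleCat.{0} Λ, projDimLE Λ n M

/-- Little left finitistic dimension at most `n`. -/
def finDimLE (Λ : Type) [Ring Λ] (n : ℕ) : Prop :=
  ∀ M : ModuleCat.{0} Λ, Module.Finite Λ M → HasFinPD Λ M → projDimLE Λ n M

/-- Big left finitistic dimension at most `n`. -/
def bigFinDimLE (Λ : Type) [Ring Λ] (n : ℕ) : Prop :=
  ∀ M : ModuleCat.{0} Λ, HasFinPD Λ M → projDimLE Λ n M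

/-- The subcategory `𝒫^{<∞}(Λ-mod)` of finitely generated modules of finite projective
dimension, as a predicate on `ModuleCat Λ`. -/
def Pinf (Λ : Type) [Ring Λ] : ModuleCat.{0} Λ → Prop :=
  fun M => Module.Finite Λ M ∧ HasFinPD Λ M

/-- The subcategory `𝒮^{<∞}(Λ-mod)`: finite direct sums of (finite-dimensional) string
modules of finite projective dimension. -/
def Sinf (P : StringPres K Λ) : ModuleCat.{0} Λ → Prop := fun M =>
  ∃ (m : ℕ) (ws : Fin m → GenWord P), (∀ i, (ws i).IsFiniteWord) ∧
    (∀ i, HasFinPD Λ (StGen P (ws i))) ∧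
    Nonempty ((M : Type) ≃ₗ[Λ] ∀ i, StGen P (ws i))

/-- `φ : A → M` is a right `𝒜`-approximation of `M`. -/
def IsRightApprox (𝒜 : ModuleCat.{0} Λ → Prop) (M A : ModuleCat.{0} Λ)
    (φ : ↑A →ₗ[Λ] ↑M) : Prop :=
  𝒜 A ∧ ∀ B : ModuleCat.{0} Λ, 𝒜 B → ∀ f : ↑B →ₗ[Λ] ↑M, ∃ g : ↑B →ₗ[Λ] ↑A, φ.comp g = f

/-- Minimal right approximation: a right approximation which embeds as a direct summand,
compatibly, into every right approximation. -/
def IsMinimalRightApprox (𝒜 : ModuleCat.{0} Λ → Prop) (M A : ModuleCat.{0} Λ)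
    (φ : ↑A →ₗ[Λ] ↑M) : Prop :=
  IsRightApprox (Λ := Λ) 𝒜 M A φ ∧ ∀ (A' : ModuleCat.{0} Λ) (φ' : ↑A' →ₗ[Λ] ↑M),
    IsRightApprox (Λ := Λ) 𝒜 M A' φ' →
    ∃ (ι : ↑A →ₗ[Λ] ↑A') (π : ↑A' →ₗ[Λ] ↑A), π.comp ι = LinearMap.id ∧ φ'.comp ι = φ

/-- `𝒜` is contravariantly finite in `Λ-mod`. -/
def ContravariantlyFinite (𝒜 : ModuleCat.{0} Λ → Prop) : Prop :=
  ∀ M : ModuleCat.{0} Λ, Module.Finite Λ M →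
    ∃ (A : ModuleCat.{0} Λ) (φ : ↑A →ₗ[Λ] ↑M), IsRightApprox (Λ := Λ) 𝒜 M A φ

/-- `φ : A → M` is a relative `C`-approximation of `M` in `𝒜`. -/
def IsRelCApprox (𝒜 : ModuleCat.{0} Λ → Prop) (C M A : ModuleCat.{0} Λ)
    (φ : ↑A →ₗ[Λ] ↑M) : Prop :=
  𝒜 A ∧ ∀ f : ↑C →ₗ[Λ] ↑M, ∃ g : ↑C →ₗ[Λ] ↑A, φ.comp g = f

/-- `H` is a subfactor of `A` (an epimorphic image of a submodule). -/
def IsSubfactor (Λ : Type) [Ring Λ] (H : Type) [AddCommGroup H] [Module Λ H]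
    (A : Type) [AddCommGroup A] [Module Λ A] : Prop :=
  ∃ (N : Submodule Λ A) (g : ↥N →ₗ[Λ] H), Function.Surjective g

/-- A finitely generated module `H` is an `𝒜`-phantom of `M`: some witness `C ∈ 𝒜`
forces `H` to be a subfactor of every relative `C`-approximation of `M` in `𝒜`. -/
def IsPhantomFG (𝒜 : ModuleCat.{0} Λ → Prop) (M : ModuleCat.{0} Λ)
    (H : Type) [AddCommGroup H] [Module Λ H] : Prop :=
  ∃ C : ModuleCat.{0} Λ, 𝒜 C ∧ ∀ (A : ModuleCat.{0} Λ) (φ : ↑A →ₗ[Λ] ↑M),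
    IsRelCApprox (Λ := Λ) 𝒜 C M A φ → IsSubfactor Λ H A

/-- An arbitrary module `H` is an `𝒜`-phantom of `M`: every finitely generated submodule is. -/
def IsPhantom (𝒜 : ModuleCat.{0} Λ → Prop) (M : ModuleCat.{0} Λ)
    (H : Type) [AddCommGroup H] [Module Λ H] : Prop :=
  ∀ N : Submodule Λ H, N.FG → IsPhantomFG (Λ := Λ) 𝒜 M ↥N

/-- `H` is a direct limit of modules from `𝒞`. -/
def IsDirLimOf (𝒞 : ModuleCat.{0} Λ → Prop) (H : Type) [AddCommGroup H] [Module Λ H] : Prop :=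
  ∃ (G : ℕ → ModuleCat.{0} Λ) (f : ∀ i j : ℕ, i ≤ j → ↑(G i) →ₗ[Λ] ↑(G j)),
    DirectedSystem (fun n => ↑(G n)) (fun i j h => f i j h) ∧ (∀ n, 𝒞 (G n)) ∧
    Nonempty ((Module.DirectLimit (fun n => ↑(G n)) f) ≃ₗ[Λ] H)

/-- `φ : H → M` is an effective `𝒞`-phantom of `M`. -/
def IsEffectivePhantom (𝒞 : ModuleCat.{0} Λ → Prop) (M : ModuleCat.{0} Λ)
    (H : Type) [AddCommGroup H] [Module Λ H] (φ : H →ₗ[Λ] ↑M) : Prop :=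
  IsPhantom (Λ := Λ) 𝒞 M H ∧ IsDirLimOf (Λ := Λ) 𝒞 H ∧
    ∀ B : ModuleCat.{0} Λ, 𝒞 B → ∀ f : ↑B →ₗ[Λ] ↑M, ∃ g : ↑B →ₗ[Λ] H, φ.comp g = f

/-- A primitive cyclic word `v = p₀⁻¹q₀ … p_t⁻¹q_t` (all syllables nontrivial, `v²` again a
word, and `v` not a power of a strictly shorter word). -/
structure BandWord (P : StringPres K Λ) : Type where
  t : ℕ
  E : Fin (t + 1) → P.V
  p : Fin (t + 1) → List P.A
  q : Fin (t + 1) → List P.A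
  pair : ∀ i, IsWordPair P (E i) (p i) (q i)
  nontriv : ∀ i, p i ≠ [] ∧ q i ≠ []
  link_v : ∀ i, P.endV (E i) (q i) = P.endV (E (i + 1)) (p (i + 1))
  link_a : ∀ i, (q i).head? ≠ (p (i + 1)).head?
  primitive : ∀ d : ℕ, d ∣ (t + 1) → d ≠ t + 1 →
    ¬ (∀ i j : Fin (t + 1), (i : ℕ) % d = (j : ℕ) % d → p i = p j ∧ q i = q j ∧ E i = E j)

/-- The relations presenting the pseudo-band module `Bd(v^{r+1}, φ)`, where the cyclic
automorphism `φ` of `K^{r+1}` is given by the Frobenius companion matrix with last column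
`c` (cyclicity of `φ` corresponds to `c 0 ≠ 0`). -/
def bandRels (P : StringPres K Λ) (v : BandWord P) (r : ℕ) (c : Fin (r + 1) → K) :
    Set ((Fin (r + 1) × Fin (v.t + 1)) → Λ) :=
  {x | ∃ ij : Fin (r + 1) × Fin (v.t + 1), x = Pi.single ij (1 - P.e (v.E ij.2))} ∪
  {x | ∃ (i : Fin (r + 1)) (j : Fin v.t),
      x = Pi.single (i, j.castSucc) (P.mon (v.E j.castSucc) (v.q j.castSucc)) -
          Pi.single (i, j.succ) (P.mon (v.E j.succ) (v.p j.succ))} ∪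
  {x | ∃ i : Fin r,
      x = Pi.single (i.castSucc, Fin.last v.t) (P.mon (v.E (Fin.last v.t)) (v.q (Fin.last v.t))) -
          Pi.single (i.succ, 0) (P.mon (v.E 0) (v.p 0))} ∪
  { Pi.single (Fin.last r, Fin.last v.t) (P.mon (v.E (Fin.last v.t)) (v.q (Fin.last v.t))) -
      ∑ i : Fin (r + 1), Pi.single (i, 0) (algebraMap K Λ (c i) * P.mon (v.E 0) (v.p 0)) }

/-- The pseudo-band module `Bd(v^{r+1}, φ_c)`. -/
abbrev BdMod (P : StringPres K Λ) (v : BandWord P) (r : ℕ) (c : Fin (r + 1) → K) : Type :=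
  ((Fin (r + 1) × Fin (v.t + 1)) → Λ) ⧸ Submodule.span Λ (bandRels P v r c)

open Fin.IntCast in
/-- `w` is the `ℤ`-periodic word `… v v v …` obtained from the primitive word `v`. -/
def PeriodicOf (P : StringPres K Λ) (v : BandWord P) (w : GenWord P) : Prop :=
  ∀ i : ℤ, w.p i = v.p (i : Fin (v.t + 1)) ∧ w.q i = v.q (i : Fin (v.t + 1)) ∧
    w.E i = v.E (i : Fin (v.t + 1))

/-- `w` agrees with `w'` (shifted by `k`) on all syllables in positions `-t,…,t`, except
that trivial boundary syllables of the truncation are not required to match (the truncation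
`w_t` of `w` is a *segment* of `w'`). -/
def MatchUpTo (P : StringPres K Λ) (w w' : GenWord P) (k : ℤ) (t : ℕ) : Prop :=
  (∀ i : ℤ, -(t : ℤ) ≤ i → i ≤ (t : ℤ) → w.E i = w'.E (i + k)) ∧
  (∀ i : ℤ, -(t : ℤ) < i → i ≤ (t : ℤ) → w.p i = w'.p (i + k)) ∧
  (∀ i : ℤ, -(t : ℤ) ≤ i → i < (t : ℤ) → w.q i = w'.q (i + k)) ∧
  (w.p (-(t : ℤ)) ≠ [] → w.p (-(t : ℤ)) = w'.p (-(t : ℤ) + k)) ∧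
  (w.q (t : ℤ) ≠ [] → w.q (t : ℤ) = w'.q ((t : ℤ) + k))

/-- `w` is *the* characteristic word of the simple module attached to the vertex `v`:
it is centered at `v`, each finite truncation is a segment of a word of finite projective
dimension, the central pair of syllables is length-minimal with this property, and at
each inductive step the outer syllables `q₋ₜ, pₜ` are chosen longest and the inner
syllables `p₋ₜ, qₜ` shortest, subject to remaining a segment of a word of finite
projective dimension (Construction 12 of the paper). -/
def IsCharWord (P : StringPres K Λ) (w : GenWord P) (v : P.V) : Prop :=
  w.E 0 = v ∧
  (∀ t : ℕ, ∃ (w' : GenWord P) (k : ℤ), HasFinPD Λ (StGen P w') ∧ MatchUpTo P w w' k t) ∧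
  (∀ (w' : GenWord P) (k : ℤ), HasFinPD Λ (StGen P w') → w'.E k = v →
      (w.p 0).length + (w.q 0).length ≤ (w'.p k).length + (w'.q k).length) ∧
  (∀ (t : ℕ) (w' : GenWord P) (k : ℤ), HasFinPD Λ (StGen P w') → MatchUpTo P w w' k t →
      (w'.p ((t : ℤ) + 1 + k)).length ≤ (w.p ((t : ℤ) + 1)).length ∧
      (w'.q (-(t : ℤ) - 1 + k)).length ≤ (w.q (-(t : ℤ) - 1)).length) ∧
  (∀ (t : ℕ) (w' : GenWord P) (k : ℤ), HasFinPD Λ (StGen P w') → MatchUpTo P w w' k t →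
      w'.p ((t : ℤ) + 1 + k) = w.p ((t : ℤ) + 1) →
      w'.q (-(t : ℤ) - 1 + k) = w.q (-(t : ℤ) - 1) →
      (w.q ((t : ℤ) + 1)).length ≤ (w'.q ((t : ℤ) + 1 + k)).length ∧
      (w.p (-(t : ℤ) - 1)).length ≤ (w'.p (-(t : ℤ) - 1 + k)).length)

/-- The canonical map `St(w) → Λe/Je` of a centered word: it sends the central standardized
top element to the residue class of the identity, and the other standardized top elements
to zero. -/
def IsCanonicalMap (P : StringPres K Λ) (w : GenWord P) (v : P.V)
    (φ : StGen P w →ₗ[Λ] SimpleAt P v) : Prop :=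
  φ (Submodule.Quotient.mk (Finsupp.single 0 1)) = Submodule.Quotient.mk 1 ∧
  ∀ i : ℤ, i ≠ 0 → φ (Submodule.Quotient.mk (Finsupp.single i 1)) = 0

/-- A uniserial module: submodules are linearly ordered by inclusion. -/
def IsUniserialMod (Λ : Type) [Ring Λ] (M : Type) [AddCommGroup M] [Module Λ M] : Prop :=
  ∀ N N' : Submodule Λ M, N ≤ N' ∨ N' ≤ N

/-- The data of a cyclic string module `St(p⁻¹q)` in the set `𝒯`: of finite projective
dimension and embeddable in the Jacobson radical `J`. -/
def InT (P : StringPres K Λ) (d : P.V × List P.A × List P.A) : Prop :=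
  IsWordPair P d.1 d.2.1 d.2.2 ∧ HasFinPD Λ (StVee P d.1 d.2.1 d.2.2) ∧
    ∃ f : StVee P d.1 d.2.1 d.2.2 →ₗ[Λ] ↥(jrad Λ), Function.Injective f

/-- `M` is (isomorphic to) a cyclic string module `St(p⁻¹q)`. -/
def IsVeeStringModule (P : StringPres K Λ) (M : Type) [AddCommGroup M] [Module Λ M] : Prop :=
  ∃ (v : P.V) (p q : List P.A), IsWordPair P v p q ∧ Nonempty (M ≃ₗ[Λ] StVee P v p q)

/-- The word `u` occurs as a segment of the word `w`, shifted by `k`: every nontrivial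
syllable of `u` equals the corresponding syllable of `w`. -/
def SegOf (P : StringPres K Λ) (u w : GenWord P) (k : ℤ) : Prop :=
  ∀ i : ℤ, (u.p i ≠ [] → u.p i = w.p (i + k)) ∧ (u.q i ≠ [] → u.q i = w.q (i + k)) ∧
    (i ∈ u.supp' → u.E i = w.E (i + k))

end StringAlg

namespace StringAlg


section AuxPoly

open Polynomial

variable {K : Type} [Field K]

/-- Congruent polynomials have the same remainder mod a monic polynomial. -/
theorem modByMonic_congr' {f P Q : K[X]} (hf : f.Monic) (h : f ∣ P - Q) :
    P %ₘ f = Q %ₘ f := by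
  have h0 : (P - Q) %ₘ f = 0 := (Polynomial.modByMonic_eq_zero_iff_dvd hf).2 h
  rw [Polynomial.sub_modByMonic] at h0
  exact sub_eq_zero.mp h0

theorem sub_modByMonic_dvd (q p : K[X]) : q ∣ p - p %ₘ q := by
  by_cases hq : q.Monic
  · exact ⟨p /ₘ q, by rw [Polynomial.modByMonic_eq_sub_mul_div p q]; ring⟩
  · rw [Polynomial.modByMonic_eq_of_not_monic p hq]; simp

/-- Matrix-vector product formula for multiplication-then-reduction. -/
theorem mulmod_sum (f u P : K[X]) {N : ℕ} (hP : P.natDegree < N) (i : ℕ) :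
    ∑ k : Fin N, ((u * X ^ (k : ℕ)) %ₘ f).coeff i * P.coeff (k : ℕ)
      = ((u * P) %ₘ f).coeff i := by
  set L : K[X] →ₗ[K] K :=
    (Polynomial.lcoeff K i).comp ((Polynomial.modByMonicHom f).comp
      (LinearMap.mulLeft K u)) with hL
  have hLapp : ∀ p : K[X], L p = ((u * p) %ₘ f).coeff i := fun p => rfl
  calc ∑ k : Fin N, ((u * X ^ (k : ℕ)) %ₘ f).coeff i * P.coeff (k : ℕ)
      = ∑ k : Fin N, P.coeff (k : ℕ) • L (X ^ (k : ℕ)) := by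
        refine Finset.sum_congr rfl fun k _ => ?_
        rw [hLapp, smul_eq_mul, mul_comm]
    _ = L (∑ k : Fin N, P.coeff (k : ℕ) • X ^ (k : ℕ)) := by rw [map_sum]; simp
    _ = ((u * P) %ₘ f).coeff i := by
        rw [← hLapp]; congr 1
        rw [Fin.sum_univ_eq_sum_range (fun k => P.coeff k • (X : K[X]) ^ k)]
        conv_rhs => rw [P.as_sum_range' N hP]
        refine Finset.sum_congr rfl fun k _ => ?_
        rw [Polynomial.smul_X_eq_monomial]

theorem natDeg_mod_lt {q : K[X]} {N : ℕ} (hN : q.degree = (N : ℕ)) (hNpos : 0 < N)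
    (hq : q.Monic) (u : K[X]) : (u %ₘ q).natDegree < N := by
  by_cases h0 : u %ₘ q = 0
  · simpa [h0] using hNpos
  · have hlt := Polynomial.degree_modByMonic_lt u hq
    rw [hN] at hlt
    exact (Polynomial.natDegree_lt_iff_degree_lt h0).2 hlt

end AuxPoly


section AuxBand

open Polynomial

variable {K Λ : Type} [Field K] [Ring Λ] [Algebra K Λ]

theorem single_mul {ι : Type} [DecidableEq ι] (p : ι) (a b : Λ) :
    Pi.single (M := fun _ => Λ) p (a * b) = a • Pi.single (M := fun _ => Λ) p b := by
  funext x
  by_cases h : x = p <;> simp [Pi.single_apply, h]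

theorem single_sum {ι : Type} [DecidableEq ι] (p : ι) {m : ℕ} (x : Fin m → K) (z : Λ) :
    ∑ i : Fin m, Pi.single (M := fun _ => Λ) p (algebraMap K Λ (x i) * z)
      = Pi.single (M := fun _ => Λ) p (algebraMap K Λ (∑ i, x i) * z) := by
  rw [map_sum, Finset.sum_mul]
  exact (map_sum (AddMonoidHom.single (fun _ : ι => Λ) p) _ _).symm

/-- The `Λ`-linear map on free modules induced by a scalar matrix `M`. -/
def matMap (J : Type) [Fintype J] {n₁ n₂ : ℕ} (M : Fin n₂ → Fin n₁ → K) :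
    ((Fin n₁ × J) → Λ) →ₗ[Λ] ((Fin n₂ × J) → Λ) where
  toFun x := fun kj => ∑ i, algebraMap K Λ (M kj.1 i) * x (i, kj.2)
  map_add' x y := by
    funext kj
    simp [mul_add, Finset.sum_add_distrib]
  map_smul' a x := by
    funext kj
    simp only [Pi.smul_apply, smul_eq_mul, RingHom.id_apply, Finset.mul_sum]
    exact Finset.sum_congr rfl fun i _ => by
      rw [← mul_assoc, ← mul_assoc, show algebraMap K Λ (M kj.1 i) * a = a * algebraMap K Λ (M kj.1 i) from Algebra.commutes _ _]

theorem matMap_single (J : Type) [Fintype J] [DecidableEq J] {n₁ n₂ : ℕ}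
    (M : Fin n₂ → Fin n₁ → K) (i : Fin n₁) (j : J) (y : Λ) :
    matMap (Λ := Λ) J M (Pi.single (i, j) y)
      = ∑ k : Fin n₂, Pi.single (k, j) (algebraMap K Λ (M k i) * y) := by
  funext ⟨k', j'⟩
  simp only [matMap, LinearMap.coe_mk, AddHom.coe_mk, Finset.sum_apply,
    Pi.single_apply, Prod.mk.injEq, mul_ite, mul_zero]
  by_cases hj : j' = j
  · subst hj
    rw [Finset.sum_eq_single i, Finset.sum_eq_single k']
    · simp
    · intro b _ hb; simp [Ne.symm hb]
    · simp
    · intro b _ hb; simp [hb]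
    · simp
  · simp [hj]

theorem matMap_matMap (J : Type) [Fintype J] {n₁ n₂ n₃ : ℕ}
    (M₂ : Fin n₃ → Fin n₂ → K) (M₁ : Fin n₂ → Fin n₁ → K) (x : (Fin n₁ × J) → Λ) :
    matMap (Λ := Λ) J M₂ (matMap J M₁ x)
      = matMap J (fun l i => ∑ k, M₂ l k * M₁ k i) x := by
  funext ⟨l, j⟩
  simp only [matMap, LinearMap.coe_mk, AddHom.coe_mk, Finset.mul_sum, map_sum, Finset.sum_mul]
  rw [Finset.sum_comm]
  refine Finset.sum_congr rfl fun i _ => ?_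
  refine Finset.sum_congr rfl fun k _ => ?_
  rw [← mul_assoc, ← map_mul]

theorem matMap_id (J : Type) [Fintype J] {n : ℕ} (M : Fin n → Fin n → K)
    (hM : ∀ i i', M i i' = if i = i' then 1 else 0) (x : (Fin n × J) → Λ) :
    matMap (Λ := Λ) J M x = x := by
  funext ⟨i, j⟩
  simp only [matMap, LinearMap.coe_mk, AddHom.coe_mk]
  rw [Finset.sum_eq_single i]
  · simp [hM]
  · intro b _ hb; simp [hM, Ne.symm hb]
  · simp

end AuxBand


section Transfer

variable {K Λ : Type} [Field K] [Ring Λ] [Algebra K Λ]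

theorem colsum_lt {n : ℕ} {J : Type} [Fintype J] [DecidableEq J]
    (A : Fin (n + 1) → Fin (n + 1) → K) (j0 : J) (z : Λ) (k : Fin (n + 1))
    (hk : (k : ℕ) + 1 < n + 1)
    (hA : ∀ l, A l k = if (l : ℕ) = (k : ℕ) + 1 then 1 else 0) :
    ∑ l, Pi.single (M := fun _ : Fin (n + 1) × J => Λ) (l, j0) (algebraMap K Λ (A l k) * z)
      = Pi.single (⟨(k : ℕ) + 1, hk⟩, j0) z := by
  rw [Finset.sum_eq_single (⟨(k : ℕ) + 1, hk⟩ : Fin (n + 1))]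
  · simp [hA]
  · intro b _ hb
    have hb' : (b : ℕ) ≠ (k : ℕ) + 1 := fun h => hb (Fin.ext h)
    simp [hA, hb']
  · simp

theorem wrap_mem (P : StringPres K Λ) (v : BandWord P) (r : ℕ) (c : Fin (r + 1) → K)
    (A : Fin (r + 1) → Fin (r + 1) → K)
    (hAlt : ∀ (k : Fin (r + 1)), (k : ℕ) + 1 < r + 1 →
      ∀ l, A l k = if (l : ℕ) = (k : ℕ) + 1 then 1 else 0)
    (hAlast : ∀ l, A l (Fin.last r) = c l) (i₀ : Fin (r + 1)) :
    Pi.single (i₀, Fin.last v.t) (P.mon (v.E (Fin.last v.t)) (v.q (Fin.last v.t)))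
      - ∑ l, Pi.single (l, (0 : Fin (v.t + 1)))
          (algebraMap K Λ (A l i₀) * P.mon (v.E 0) (v.p 0))
      ∈ bandRels P v r c := by
  by_cases h : (i₀ : ℕ) + 1 < r + 1
  · rw [colsum_lt A _ _ i₀ h (hAlt i₀ h)]
    refine Or.inl (Or.inr ⟨⟨(i₀ : ℕ), by omega⟩, ?_⟩)
    rfl
  · have hi : i₀ = Fin.last r := Fin.ext (by have := i₀.isLt; simp [Fin.last]; omega)
    subst hi
    refine Or.inr ?_
    show _ = _
    simp only [hAlast]

theorem transfer (P : StringPres K Λ) (v : BandWord P) {r₁ r₂ : ℕ}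
    (c₁ : Fin (r₁ + 1) → K) (c₂ : Fin (r₂ + 1) → K)
    (M : Fin (r₂ + 1) → Fin (r₁ + 1) → K)
    (A₁ : Fin (r₁ + 1) → Fin (r₁ + 1) → K) (A₂ : Fin (r₂ + 1) → Fin (r₂ + 1) → K)
    (hA₁lt : ∀ (k : Fin (r₁ + 1)), (k : ℕ) + 1 < r₁ + 1 →
      ∀ l, A₁ l k = if (l : ℕ) = (k : ℕ) + 1 then 1 else 0)
    (hA₁last : ∀ l, A₁ l (Fin.last r₁) = c₁ l)
    (hA₂lt : ∀ (k : Fin (r₂ + 1)), (k : ℕ) + 1 < r₂ + 1 →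
      ∀ l, A₂ l k = if (l : ℕ) = (k : ℕ) + 1 then 1 else 0)
    (hA₂last : ∀ l, A₂ l (Fin.last r₂) = c₂ l)
    (hM : ∀ (l : Fin (r₂ + 1)) (i : Fin (r₁ + 1)),
      ∑ k, A₂ l k * M k i = ∑ i', M l i' * A₁ i' i) :
    ∀ x ∈ bandRels P v r₁ c₁,
      matMap (Λ := Λ) (Fin (v.t + 1)) M x ∈ Submodule.span Λ (bandRels P v r₂ c₂) := by
  set Q : Λ := P.mon (v.E (Fin.last v.t)) (v.q (Fin.last v.t)) with hQ
  set P0 : Λ := P.mon (v.E 0) (v.p 0) with hP0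
  have key : ∀ i₀ : Fin (r₁ + 1),
      matMap (Λ := Λ) (Fin (v.t + 1)) M
        (Pi.single (i₀, Fin.last v.t) Q
          - ∑ l, Pi.single (l, (0 : Fin (v.t + 1))) (algebraMap K Λ (A₁ l i₀) * P0))
        ∈ Submodule.span Λ (bandRels P v r₂ c₂) := by
    intro i₀
    have expand : matMap (Λ := Λ) (Fin (v.t + 1)) M
        (Pi.single (i₀, Fin.last v.t) Q
          - ∑ l, Pi.single (l, (0 : Fin (v.t + 1))) (algebraMap K Λ (A₁ l i₀) * P0))
        = (∑ k, Pi.single (k, Fin.last v.t) (algebraMap K Λ (M k i₀) * Q))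
          - ∑ k, Pi.single (k, (0 : Fin (v.t + 1)))
              (algebraMap K Λ (∑ i', M k i' * A₁ i' i₀) * P0) := by
      rw [map_sub, matMap_single, map_sum]
      congr 1
      calc ∑ l, matMap (Λ := Λ) (Fin (v.t + 1)) M
              (Pi.single (l, (0 : Fin (v.t + 1))) (algebraMap K Λ (A₁ l i₀) * P0))
          = ∑ l, ∑ k, Pi.single (k, (0 : Fin (v.t + 1)))
              (algebraMap K Λ (M k l * A₁ l i₀) * P0) := by
            refine Finset.sum_congr rfl fun l _ => ?_
            rw [matMap_single]
            refine Finset.sum_congr rfl fun k _ => ?_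
            rw [map_mul, mul_assoc]
        _ = ∑ k, ∑ l, Pi.single (k, (0 : Fin (v.t + 1)))
              (algebraMap K Λ (M k l * A₁ l i₀) * P0) := Finset.sum_comm
        _ = ∑ k, Pi.single (k, (0 : Fin (v.t + 1)))
              (algebraMap K Λ (∑ i', M k i' * A₁ i' i₀) * P0) := by
            refine Finset.sum_congr rfl fun k _ => ?_
            rw [single_sum]
    have expand2 : (∑ k, algebraMap K Λ (M k i₀) •
          (Pi.single (M := fun _ : Fin (r₂ + 1) × Fin (v.t + 1) => Λ) (k, Fin.last v.t) Q
            - ∑ l, Pi.single (l, (0 : Fin (v.t + 1))) (algebraMap K Λ (A₂ l k) * P0)))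
        = (∑ k, Pi.single (k, Fin.last v.t) (algebraMap K Λ (M k i₀) * Q))
          - ∑ k, Pi.single (k, (0 : Fin (v.t + 1)))
              (algebraMap K Λ (∑ i', M k i' * A₁ i' i₀) * P0) := by
      simp only [smul_sub, Finset.smul_sum]
      rw [Finset.sum_sub_distrib]
      congr 1
      · exact Finset.sum_congr rfl fun k _ => (single_mul _ _ _).symm
      calc ∑ k, ∑ l, algebraMap K Λ (M k i₀) •
              Pi.single (M := fun _ : Fin (r₂ + 1) × Fin (v.t + 1) => Λ)
                (l, (0 : Fin (v.t + 1))) (algebraMap K Λ (A₂ l k) * P0)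
          = ∑ l, ∑ k, Pi.single (l, (0 : Fin (v.t + 1)))
              (algebraMap K Λ (A₂ l k * M k i₀) * P0) := by
            rw [Finset.sum_comm]
            refine Finset.sum_congr rfl fun l _ => Finset.sum_congr rfl fun k _ => ?_
            rw [← single_mul, ← mul_assoc, ← map_mul, mul_comm (M k i₀)]
        _ = ∑ l, Pi.single (l, (0 : Fin (v.t + 1)))
              (algebraMap K Λ (∑ k, A₂ l k * M k i₀) * P0) := by
            refine Finset.sum_congr rfl fun l _ => ?_
            rw [single_sum]
        _ = ∑ k, Pi.single (k, (0 : Fin (v.t + 1)))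
              (algebraMap K Λ (∑ i', M k i' * A₁ i' i₀) * P0) := by
            refine Finset.sum_congr rfl fun l _ => ?_
            rw [hM]
    rw [expand, ← expand2]
    exact Submodule.sum_mem _ fun k _ => Submodule.smul_mem _ _
      (Submodule.subset_span (wrap_mem P v r₂ c₂ A₂ hA₂lt hA₂last k))
  intro x hx
  rcases hx with ((h1 | h2) | h3) | h4
  · obtain ⟨⟨i, j⟩, rfl⟩ := h1
    rw [matMap_single]
    refine Submodule.sum_mem _ fun k _ => ?_
    rw [single_mul]
    exact Submodule.smul_mem _ _
      (Submodule.subset_span (Or.inl (Or.inl (Or.inl ⟨(k, j), rfl⟩))))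
  · obtain ⟨i, j, rfl⟩ := h2
    rw [map_sub, matMap_single, matMap_single, ← Finset.sum_sub_distrib]
    refine Submodule.sum_mem _ fun k _ => ?_
    rw [single_mul, single_mul, ← smul_sub]
    exact Submodule.smul_mem _ _
      (Submodule.subset_span (Or.inl (Or.inl (Or.inr ⟨k, j, rfl⟩))))
  · obtain ⟨i, rfl⟩ := h3
    have hk : (i.castSucc : ℕ) + 1 < r₁ + 1 := by
      simp only [Fin.coe_castSucc]
      omega
    have hcol := colsum_lt (Λ := Λ) A₁ (0 : Fin (v.t + 1)) P0 i.castSucc hk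
      (hA₁lt i.castSucc hk)
    have hsucc : Pi.single (M := fun _ : Fin (r₁ + 1) × Fin (v.t + 1) => Λ)
        (i.succ, (0 : Fin (v.t + 1))) P0
        = ∑ l, Pi.single (l, (0 : Fin (v.t + 1))) (algebraMap K Λ (A₁ l i.castSucc) * P0) := by
      rw [hcol]
      rfl
    rw [hsucc]
    exact key i.castSucc
  · rw [Set.mem_singleton_iff] at h4
    subst h4
    have hlast : (∑ i, Pi.single (M := fun _ : Fin (r₁ + 1) × Fin (v.t + 1) => Λ)
          (i, (0 : Fin (v.t + 1))) (algebraMap K Λ (c₁ i) * P0))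
        = ∑ l, Pi.single (l, (0 : Fin (v.t + 1)))
            (algebraMap K Λ (A₁ l (Fin.last r₁)) * P0) := by
      simp only [hA₁last]
    rw [hlast]
    exact key (Fin.last r₁)

end Transfer


section AuxPoly2

open Polynomial

variable {K : Type} [Field K]

theorem degree_finsum_lt (m : ℕ) (cc : Fin (m + 1) → K) :
    (∑ i : Fin (m + 1), C (cc i) * X ^ (i : ℕ)).degree < ((m + 1 : ℕ) : WithBot ℕ) := by
  refine lt_of_le_of_lt (Polynomial.degree_sum_le _ _) ?_
  rw [Finset.sup_lt_iff (by exact_mod_cast WithBot.bot_lt_coe (m + 1))]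
  intro i _
  refine lt_of_le_of_lt (Polynomial.degree_C_mul_X_pow_le _ _) ?_
  exact_mod_cast i.isLt

theorem coeff_finsum (m : ℕ) (cc : Fin (m + 1) → K) (l : Fin (m + 1)) :
    (∑ i : Fin (m + 1), C (cc i) * X ^ (i : ℕ)).coeff (l : ℕ) = cc l := by
  rw [Polynomial.finset_sum_coeff, Finset.sum_eq_single l]
  · simp
  · intro b _ hb
    have hb' : (l : ℕ) ≠ (b : ℕ) := fun h => hb (Fin.ext h.symm)
    simp [Polynomial.coeff_C_mul, Polynomial.coeff_X_pow, hb']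
  · simp

theorem companion_lt (F : K[X]) (hF : F.Monic) {N : ℕ}
    (hdeg : F.degree = ((N + 1 : ℕ) : WithBot ℕ)) (k : ℕ) (hk : k + 1 < N + 1) (l : ℕ) :
    ((X * X ^ k) %ₘ F).coeff l = if l = k + 1 then 1 else 0 := by
  have h1 : (X : K[X]) * X ^ k = X ^ (k + 1) := (pow_succ' X k).symm
  have hself : (X ^ (k + 1) : K[X]) %ₘ F = X ^ (k + 1) :=
    (Polynomial.modByMonic_eq_self_iff hF).2 (by
      rw [Polynomial.degree_X_pow, hdeg]
      exact_mod_cast hk)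
  rw [h1, hself, Polynomial.coeff_X_pow]

theorem companion_last (F : K[X]) (hF : F.Monic) {N : ℕ}
    (hdeg : F.degree = ((N + 1 : ℕ) : WithBot ℕ)) (l : ℕ) (hl : l < N + 1) :
    ((X * X ^ N) %ₘ F).coeff l = - F.coeff l := by
  have h1 : (X : K[X]) * X ^ N = X ^ (N + 1) := (pow_succ' X N).symm
  have hdvd : F ∣ X ^ (N + 1) - (X ^ (N + 1) - F) := by simp
  have hdlt : (X ^ (N + 1) - F : K[X]).degree < ((N + 1 : ℕ) : WithBot ℕ) := by
    have := Polynomial.degree_sub_lt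
      (p := (X ^ (N + 1) : K[X])) (q := F)
      (by rw [Polynomial.degree_X_pow, hdeg])
      (pow_ne_zero _ Polynomial.X_ne_zero)
      (by rw [Polynomial.leadingCoeff_X_pow, hF.leadingCoeff])
    rwa [Polynomial.degree_X_pow] at this
  have hself : (X ^ (N + 1) - F : K[X]) %ₘ F = X ^ (N + 1) - F :=
    (Polynomial.modByMonic_eq_self_iff hF).2 (by rw [hdeg]; exact hdlt)
  rw [h1, modByMonic_congr' hF hdvd, hself, Polynomial.coeff_sub,
    Polynomial.coeff_X_pow, if_neg (by omega), zero_sub]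

end AuxPoly2

/-- Remark 21: over an infinite field, any pseudo-band module
`Bd(vʳ, φ)` is a direct summand of a pseudo-band module `Bd(vˢ, ψ)` for every `s ≥ r`. -/
theorem pseudo_band_module_summand_of_larger
    {K Λ : Type} [Field K] [Infinite K] [Ring Λ] [Algebra K Λ] [FiniteDimensional K Λ]
    (P : StringPres K Λ) (v : BandWord P) (r : ℕ) (c : Fin (r + 1) → K) (hc : c 0 ≠ 0)
    (s : ℕ) (hrs : r ≤ s) :
    ∃ c' : Fin (s + 1) → K, c' 0 ≠ 0 ∧
      ∃ (ι : BdMod P v r c →ₗ[Λ] BdMod P v s c')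
        (π : BdMod P v s c' →ₗ[Λ] BdMod P v r c), π.comp ι = LinearMap.id := by
  classical
  -- the companion polynomial of `φ = φ_c`
  set f : Polynomial K :=
    Polynomial.X ^ (r + 1) - ∑ i : Fin (r + 1), Polynomial.C (c i) * Polynomial.X ^ (i : ℕ)
    with hf_def
  have hfmonic : f.Monic := Polynomial.monic_X_pow_sub (by exact_mod_cast degree_finsum_lt r c)
  have hfne : f ≠ 0 := hfmonic.ne_zero
  have hfdeg : f.degree = ((r + 1 : ℕ) : WithBot ℕ) := by
    rw [hf_def, Polynomial.degree_sub_eq_left_of_degree_lt, Polynomial.degree_X_pow]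
    rw [Polynomial.degree_X_pow]
    exact degree_finsum_lt r c
  have hfcoeff : ∀ l : Fin (r + 1), f.coeff (l : ℕ) = - c l := by
    intro l
    rw [hf_def, Polynomial.coeff_sub, Polynomial.coeff_X_pow, coeff_finsum,
      if_neg (by have := l.isLt; omega), zero_sub]
  -- choose a point avoiding `0` and the roots of `f`
  obtain ⟨a, ha0, hfa⟩ : ∃ a : K, a ≠ 0 ∧ ¬ f.IsRoot a := by
    by_contra hcon
    push_neg at hcon
    have hall : {x : K | (f * Polynomial.X).IsRoot x} = Set.univ :=
      Set.eq_univ_of_forall (fun x => by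
        by_cases hx : x = 0
        · simp [Polynomial.IsRoot, hx]
        · show (f * Polynomial.X).IsRoot x
          have := hcon x hx
          simp only [Polynomial.IsRoot] at this ⊢
          simp [this])
    have hz := Polynomial.eq_zero_of_infinite_isRoot (f * Polynomial.X)
      (hall ▸ Set.infinite_univ)
    exact mul_ne_zero hfne Polynomial.X_ne_zero hz
  set d := s - r with hd_def
  set hpol : Polynomial K := (Polynomial.X - Polynomial.C a) ^ d with hh_def
  set g : Polynomial K := f * hpol with hg_def
  have hhmonic : hpol.Monic := (Polynomial.monic_X_sub_C a).pow d
  have hgmonic : g.Monic := hfmonic.mul hhmonic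
  have hgne : g ≠ 0 := hgmonic.ne_zero
  have hgdeg : g.degree = ((s + 1 : ℕ) : WithBot ℕ) := by
    rw [hg_def, Polynomial.degree_mul, hfdeg, hh_def, Polynomial.degree_pow,
      Polynomial.degree_X_sub_C]
    have heq : ((r + 1 : ℕ) : WithBot ℕ) + (d : ℕ) • (1 : WithBot ℕ) = ((s + 1 : ℕ) : WithBot ℕ) := by
      rw [nsmul_eq_mul, mul_one, ← Nat.cast_add]
      congr 1
      omega
    exact heq
  -- Bezout coefficients
  have hcop : IsCoprime f hpol := by
    have h1 : IsCoprime (Polynomial.X - Polynomial.C a) f :=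
      (Polynomial.irreducible_X_sub_C a).coprime_iff_not_dvd.2
        (by rw [Polynomial.dvd_iff_isRoot]; exact hfa)
    exact h1.symm.pow_right
  obtain ⟨aa, bb, hbez⟩ := hcop
  have hdvd_fg : f ∣ g := ⟨hpol, rfl⟩
  -- the new coefficient vector
  set c' : Fin (s + 1) → K := fun i => - g.coeff (i : ℕ) with hc'_def
  have hc'0 : c' 0 ≠ 0 := by
    have hg0 : g.coeff 0 = g.eval 0 := Polynomial.coeff_zero_eq_eval_zero g
    have hfz : f.eval 0 = - c 0 := by
      rw [← Polynomial.coeff_zero_eq_eval_zero]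
      simpa using hfcoeff 0
    have hhz : hpol.eval 0 = (- a) ^ d := by
      simp [hh_def]
    have : g.eval 0 = (- c 0) * (- a) ^ d := by
      rw [hg_def, Polynomial.eval_mul, hfz, hhz]
    have hc'val : c' 0 = c 0 * (- a) ^ d := by
      show - g.coeff ((0 : Fin (s + 1)) : ℕ) = _
      rw [Fin.val_zero, hg0, this]
      ring
    rw [hc'val]
    exact mul_ne_zero hc (pow_ne_zero _ (neg_ne_zero.2 ha0))
  refine ⟨c', hc'0, ?_⟩
  -- companion matrices and the intertwining/splitting matrices
  set Af : Fin (r + 1) → Fin (r + 1) → K :=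
    fun l k => ((Polynomial.X * Polynomial.X ^ (k : ℕ)) %ₘ f).coeff (l : ℕ) with hAf_def
  set Ag : Fin (s + 1) → Fin (s + 1) → K :=
    fun l k => ((Polynomial.X * Polynomial.X ^ (k : ℕ)) %ₘ g).coeff (l : ℕ) with hAg_def
  set Θ : Fin (s + 1) → Fin (r + 1) → K :=
    fun k i => ((hpol * Polynomial.X ^ (i : ℕ)) %ₘ g).coeff (k : ℕ) with hΘ_def
  set Pim : Fin (r + 1) → Fin (s + 1) → K :=
    fun i k => ((bb * Polynomial.X ^ (k : ℕ)) %ₘ f).coeff (i : ℕ) with hPim_def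
  have hmodf : ∀ u : Polynomial K, (u %ₘ f).natDegree < r + 1 :=
    natDeg_mod_lt hfdeg (by omega) hfmonic
  have hmodg : ∀ u : Polynomial K, (u %ₘ g).natDegree < s + 1 :=
    natDeg_mod_lt hgdeg (by omega) hgmonic
  -- companion matrix columns
  have hAf_lt : ∀ (k : Fin (r + 1)), (k : ℕ) + 1 < r + 1 →
      ∀ l, Af l k = if (l : ℕ) = (k : ℕ) + 1 then 1 else 0 := by
    intro k hk l
    exact companion_lt f hfmonic hfdeg (k : ℕ) hk (l : ℕ)
  have hAf_last : ∀ l, Af l (Fin.last r) = c l := by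
    intro l
    show ((Polynomial.X * Polynomial.X ^ ((Fin.last r : Fin (r + 1)) : ℕ)) %ₘ f).coeff (l : ℕ) = c l
    rw [Fin.val_last, companion_last f hfmonic hfdeg (l : ℕ) l.isLt, hfcoeff l, neg_neg]
  have hAg_lt : ∀ (k : Fin (s + 1)), (k : ℕ) + 1 < s + 1 →
      ∀ l, Ag l k = if (l : ℕ) = (k : ℕ) + 1 then 1 else 0 := by
    intro k hk l
    exact companion_lt g hgmonic hgdeg (k : ℕ) hk (l : ℕ)
  have hAg_last : ∀ l, Ag l (Fin.last s) = c' l := by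
    intro l
    show ((Polynomial.X * Polynomial.X ^ ((Fin.last s : Fin (s + 1)) : ℕ)) %ₘ g).coeff (l : ℕ) = c' l
    rw [Fin.val_last, companion_last g hgmonic hgdeg (l : ℕ) l.isLt]
  -- the intertwining identities
  have hMΘ : ∀ (l : Fin (s + 1)) (i : Fin (r + 1)),
      ∑ k, Ag l k * Θ k i = ∑ i', Θ l i' * Af i' i := by
    intro l i
    have e1 : ∑ k, Ag l k * Θ k i
        = ((Polynomial.X * ((hpol * Polynomial.X ^ (i : ℕ)) %ₘ g)) %ₘ g).coeff (l : ℕ) :=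
      mulmod_sum g Polynomial.X _ (hmodg _) (l : ℕ)
    have e2 : ∑ i', Θ l i' * Af i' i
        = ((hpol * ((Polynomial.X * Polynomial.X ^ (i : ℕ)) %ₘ f)) %ₘ g).coeff (l : ℕ) :=
      mulmod_sum g hpol _ (hmodf _) (l : ℕ)
    rw [e1, e2]
    congr 1
    apply modByMonic_congr' hgmonic
    have d1 : g ∣ Polynomial.X * ((hpol * Polynomial.X ^ (i : ℕ))
        - (hpol * Polynomial.X ^ (i : ℕ)) %ₘ g) := (sub_modByMonic_dvd g _).mul_left _
    have d2 : g ∣ hpol * ((Polynomial.X * Polynomial.X ^ (i : ℕ))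
        - (Polynomial.X * Polynomial.X ^ (i : ℕ)) %ₘ f) := by
      obtain ⟨w, hw⟩ := sub_modByMonic_dvd f (Polynomial.X * Polynomial.X ^ (i : ℕ))
      exact ⟨w, by rw [hg_def, hw]; ring⟩
    have hre : Polynomial.X * ((hpol * Polynomial.X ^ (i : ℕ)) %ₘ g)
          - hpol * ((Polynomial.X * Polynomial.X ^ (i : ℕ)) %ₘ f)
        = hpol * ((Polynomial.X * Polynomial.X ^ (i : ℕ))
            - (Polynomial.X * Polynomial.X ^ (i : ℕ)) %ₘ f)
          - Polynomial.X * ((hpol * Polynomial.X ^ (i : ℕ))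
            - (hpol * Polynomial.X ^ (i : ℕ)) %ₘ g) := by ring
    rw [hre]
    exact dvd_sub d2 d1
  have hMPi : ∀ (l : Fin (r + 1)) (i : Fin (s + 1)),
      ∑ k, Af l k * Pim k i = ∑ i', Pim l i' * Ag i' i := by
    intro l i
    have e1 : ∑ k, Af l k * Pim k i
        = ((Polynomial.X * ((bb * Polynomial.X ^ (i : ℕ)) %ₘ f)) %ₘ f).coeff (l : ℕ) :=
      mulmod_sum f Polynomial.X _ (hmodf _) (l : ℕ)
    have e2 : ∑ i', Pim l i' * Ag i' i
        = ((bb * ((Polynomial.X * Polynomial.X ^ (i : ℕ)) %ₘ g)) %ₘ f).coeff (l : ℕ) :=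
      mulmod_sum f bb _ (hmodg _) (l : ℕ)
    rw [e1, e2]
    congr 1
    apply modByMonic_congr' hfmonic
    have d1 : f ∣ Polynomial.X * ((bb * Polynomial.X ^ (i : ℕ))
        - (bb * Polynomial.X ^ (i : ℕ)) %ₘ f) := (sub_modByMonic_dvd f _).mul_left _
    have d2 : f ∣ bb * ((Polynomial.X * Polynomial.X ^ (i : ℕ))
        - (Polynomial.X * Polynomial.X ^ (i : ℕ)) %ₘ g) :=
      (hdvd_fg.trans (sub_modByMonic_dvd g _)).mul_left bb
    have hre : Polynomial.X * ((bb * Polynomial.X ^ (i : ℕ)) %ₘ f)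
          - bb * ((Polynomial.X * Polynomial.X ^ (i : ℕ)) %ₘ g)
        = bb * ((Polynomial.X * Polynomial.X ^ (i : ℕ))
            - (Polynomial.X * Polynomial.X ^ (i : ℕ)) %ₘ g)
          - Polynomial.X * ((bb * Polynomial.X ^ (i : ℕ))
            - (bb * Polynomial.X ^ (i : ℕ)) %ₘ f) := by ring
    rw [hre]
    exact dvd_sub d2 d1
  have hPiTheta : ∀ (i i' : Fin (r + 1)),
      ∑ k, Pim i k * Θ k i' = if i = i' then 1 else 0 := by
    intro i i'
    have e1 : ∑ k, Pim i k * Θ k i'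
        = ((bb * ((hpol * Polynomial.X ^ (i' : ℕ)) %ₘ g)) %ₘ f).coeff (i : ℕ) :=
      mulmod_sum f bb _ (hmodg _) (i : ℕ)
    have hcongr : (bb * ((hpol * Polynomial.X ^ (i' : ℕ)) %ₘ g)) %ₘ f
        = (Polynomial.X ^ (i' : ℕ)) %ₘ f := by
      apply modByMonic_congr' hfmonic
      have d1 : f ∣ bb * ((hpol * Polynomial.X ^ (i' : ℕ))
          - (hpol * Polynomial.X ^ (i' : ℕ)) %ₘ g) :=
        (hdvd_fg.trans (sub_modByMonic_dvd g _)).mul_left bb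
      have d2 : f ∣ bb * (hpol * Polynomial.X ^ (i' : ℕ)) - Polynomial.X ^ (i' : ℕ) :=
        ⟨- (aa * Polynomial.X ^ (i' : ℕ)), by linear_combination (Polynomial.X : Polynomial K) ^ (i' : ℕ) * hbez⟩
      have hre : bb * ((hpol * Polynomial.X ^ (i' : ℕ)) %ₘ g) - Polynomial.X ^ (i' : ℕ)
          = (bb * (hpol * Polynomial.X ^ (i' : ℕ)) - Polynomial.X ^ (i' : ℕ))
            - bb * ((hpol * Polynomial.X ^ (i' : ℕ))
              - (hpol * Polynomial.X ^ (i' : ℕ)) %ₘ g) := by ring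
      rw [hre]
      exact dvd_sub d2 d1
    have hself : (Polynomial.X ^ (i' : ℕ) : Polynomial K) %ₘ f = Polynomial.X ^ (i' : ℕ) :=
      (Polynomial.modByMonic_eq_self_iff hfmonic).2 (by
        rw [Polynomial.degree_X_pow, hfdeg]
        exact_mod_cast i'.isLt)
    rw [e1, hcongr, hself, Polynomial.coeff_X_pow]
    by_cases hii : i = i'
    · simp [hii]
    · have : (i : ℕ) ≠ (i' : ℕ) := fun h => hii (Fin.ext h)
      simp [hii, this]
  -- the two induced maps between the band modules
  have htransΘ := transfer P v c c' Θ Af Ag hAf_lt hAf_last hAg_lt hAg_last hMΘ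
  have htransPi := transfer P v c' c Pim Ag Af hAg_lt hAg_last hAf_lt hAf_last hMPi
  have hker1 : Submodule.span Λ (bandRels P v r c) ≤
      LinearMap.ker ((Submodule.span Λ (bandRels P v s c')).mkQ.comp
        (matMap (Fin (v.t + 1)) Θ)) := by
    rw [Submodule.span_le]
    intro x hx
    simp only [SetLike.mem_coe, LinearMap.mem_ker, LinearMap.comp_apply,
      Submodule.mkQ_apply, Submodule.Quotient.mk_eq_zero]
    exact htransΘ x hx
  have hker2 : Submodule.span Λ (bandRels P v s c') ≤
      LinearMap.ker ((Submodule.span Λ (bandRels P v r c)).mkQ.comp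
        (matMap (Fin (v.t + 1)) Pim)) := by
    rw [Submodule.span_le]
    intro x hx
    simp only [SetLike.mem_coe, LinearMap.mem_ker, LinearMap.comp_apply,
      Submodule.mkQ_apply, Submodule.Quotient.mk_eq_zero]
    exact htransPi x hx
  refine ⟨Submodule.liftQ _ ((Submodule.span Λ (bandRels P v s c')).mkQ.comp
      (matMap (Fin (v.t + 1)) Θ)) hker1,
    Submodule.liftQ _ ((Submodule.span Λ (bandRels P v r c)).mkQ.comp
      (matMap (Fin (v.t + 1)) Pim)) hker2, ?_⟩
  apply Submodule.linearMap_qext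
  refine LinearMap.ext fun x => ?_
  simp only [LinearMap.comp_apply, Submodule.mkQ_apply, Submodule.liftQ_apply,
    LinearMap.id_apply]
  rw [matMap_matMap]
  rw [matMap_id _ _ hPiTheta]


end StringAlg
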